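/- Let E be a finite-dimensional real inner product space, θ ∈ E, ρ > 0, and let M : E → ℝ be twice continuously differentiable with Hessian ∇²M Lipschitz continuous with constant L ≥ 0. Let ε* be a minimizer of ε ↦ M(θ + ε) over the closed ball {ε : ‖ε‖ ≤ ρ}, and define the Anchor Gap Γ(θ) = M(θ) − M(θ + ε*). Then Γ(θ) ≤ ρ‖∇M(θ)‖ − (1/2)⟨ε*, ∇²M(θ) ε*⟩ + (L/6)ρ³. -/

import Mathlib

open RealInnerProductSpace

section Aux

open intervalIntegral InnerProductSpace

/-- Second-order Taylor lower bound for a `C²` function with Lipschitz Hessian. -/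
theorem taylor_lower_bound
    {E : Type*} [NormedAddCommGroup E] [InnerProductSpace ℝ E]
    [FiniteDimensional ℝ E]
    (M : E → ℝ) (θ ε : E)
    (hM : ContDiff ℝ 2 M)
    (L : ℝ)
    (hLip : ∀ x y : E,
      ‖fderiv ℝ (gradient M) x - fderiv ℝ (gradient M) y‖ ≤ L * ‖x - y‖) :
    M θ + ⟪gradient M θ, ε⟫ + (1 / 2) * ⟪fderiv ℝ (gradient M) θ ε, ε⟫
      - (L / 6) * ‖ε‖ ^ 3 ≤ M (θ + ε) := by
  set g := gradient M with hg
  set H := fderiv ℝ g with hH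
  -- `g` is C¹
  have hg_cd : ContDiff ℝ 1 g := by
    have h1 : ContDiff ℝ 1 (fderiv ℝ M) := hM.fderiv_right (by norm_num)
    have : g = fun x => (toDual ℝ E).symm (fderiv ℝ M x) := rfl
    rw [this]
    exact (toDual ℝ E).symm.toContinuousLinearEquiv.toContinuousLinearMap.contDiff.comp h1
  have hg_diff : Differentiable ℝ g := hg_cd.differentiable one_ne_zero
  have hM_diff : Differentiable ℝ M := hM.differentiable two_ne_zero
  have hH_cont : Continuous H := hg_cd.continuous_fderiv one_ne_zero
  set c : ℝ → E := fun t => θ + t • ε with hc_def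
  have hc : ∀ t : ℝ, HasDerivAt c ε t := by
    intro t
    have : HasDerivAt (fun t : ℝ => t • ε) ((1 : ℝ) • ε) t :=
      (hasDerivAt_id t).smul_const ε
    simpa only [one_smul] using this.const_add θ
  have hc0 : c 0 = θ := by simp [hc_def]
  have hc1 : c 1 = θ + ε := by simp [hc_def]
  set φ : ℝ → ℝ := fun t => M (c t) with hφ_def
  set dφ : ℝ → ℝ := fun t => ⟪g (c t), ε⟫ with hdφ_def
  set ddφ : ℝ → ℝ := fun t => ⟪H (c t) ε, ε⟫ with hddφ_def
  have hφ' : ∀ t : ℝ, HasDerivAt φ (dφ t) t := by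
    intro t
    have h1 : HasFDerivAt M (toDual ℝ E (g (c t))) (c t) :=
      (hM_diff (c t)).hasGradientAt.hasFDerivAt
    have := h1.comp_hasDerivAt t (hc t)
    simp [hφ_def, hdφ_def, toDual_apply_apply] at this
    exact this
  have hdφ' : ∀ t : ℝ, HasDerivAt dφ (ddφ t) t := by
    intro t
    have h1 : HasDerivAt (fun t => g (c t)) (H (c t) ε) t :=
      (hg_diff (c t)).hasFDerivAt.comp_hasDerivAt t (hc t)
    have h2 := (innerSL ℝ ε).hasFDerivAt.comp_hasDerivAt t h1
    have h3 : HasDerivAt (fun t => ⟪ε, g (c t)⟫) (⟪ε, (H (c t)) ε⟫) t := by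
      simp at h2
      exact h2
    simpa [hdφ_def, hddφ_def, real_inner_comm ε] using h3
  have hc_cont : Continuous c := by fun_prop
  have hddφ_cont : Continuous ddφ := by
    apply Continuous.inner _ continuous_const
    exact (isBoundedBilinearMap_apply.continuous).comp
      ((hH_cont.comp hc_cont).prodMk continuous_const)
  have hdφ_cont : Continuous dφ := by
    apply Continuous.inner _ continuous_const
    exact (hg_cd.continuous.comp hc_cont)
  -- pointwise bound on ddφ
  have hdd_bound : ∀ s : ℝ, 0 ≤ s → ddφ 0 - L * ‖ε‖ ^ 3 * s ≤ ddφ s := by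
    intro s hs
    have h1 : |ddφ s - ddφ 0| ≤ L * ‖ε‖ ^ 3 * s := by
      have : ddφ s - ddφ 0 = ⟪(H (c s) - H (c 0)) ε, ε⟫ := by
        simp [hddφ_def, ContinuousLinearMap.sub_apply, inner_sub_left]
      rw [this]
      calc |⟪(H (c s) - H (c 0)) ε, ε⟫| ≤ ‖(H (c s) - H (c 0)) ε‖ * ‖ε‖ :=
            abs_real_inner_le_norm _ _
        _ ≤ (‖H (c s) - H (c 0)‖ * ‖ε‖) * ‖ε‖ := by
            gcongr; exact (H (c s) - H (c 0)).le_opNorm ε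
        _ ≤ ((L * ‖c s - c 0‖) * ‖ε‖) * ‖ε‖ :=
            mul_le_mul_of_nonneg_right (mul_le_mul_of_nonneg_right
              (hLip (c s) (c 0)) (norm_nonneg ε)) (norm_nonneg ε)
        _ = L * ‖ε‖ ^ 3 * s := by
            have : c s - c 0 = s • ε := by simp [hc_def]
            rw [this, norm_smul, Real.norm_eq_abs, abs_of_nonneg hs]; ring
    have := abs_le.mp h1
    linarith [this.1]
  -- first integration: lower bound on dφ t for t ≥ 0
  have hdφ_bound : ∀ t : ℝ, 0 ≤ t →
      dφ 0 + ddφ 0 * t - (L * ‖ε‖ ^ 3 / 2) * t ^ 2 ≤ dφ t := by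
    intro t ht
    have hftc : ∫ s in (0:ℝ)..t, ddφ s = dφ t - dφ 0 :=
      intervalIntegral.integral_eq_sub_of_hasDerivAt (fun s _ => hdφ' s)
        (hddφ_cont.intervalIntegrable 0 t)
    have hmono : ∫ s in (0:ℝ)..t, (ddφ 0 - L * ‖ε‖ ^ 3 * s) ≤ ∫ s in (0:ℝ)..t, ddφ s := by
      apply intervalIntegral.integral_mono_on ht
      · exact ((continuous_const.sub (continuous_const.mul continuous_id)).intervalIntegrable 0 t)
      · exact hddφ_cont.intervalIntegrable 0 t
      · intro s hs
        exact hdd_bound s hs.1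
    have hI1 : IntervalIntegrable (fun _ : ℝ => ddφ 0) MeasureTheory.volume 0 t :=
      intervalIntegrable_const
    have hI2 : IntervalIntegrable (fun s : ℝ => L * ‖ε‖ ^ 3 * s) MeasureTheory.volume 0 t := by
      apply Continuous.intervalIntegrable; fun_prop
    have hcomp : ∫ s in (0:ℝ)..t, (ddφ 0 - L * ‖ε‖ ^ 3 * s) =
        ddφ 0 * t - (L * ‖ε‖ ^ 3 / 2) * t ^ 2 := by
      rw [intervalIntegral.integral_sub hI1 hI2,
        intervalIntegral.integral_const_mul, integral_id, intervalIntegral.integral_const]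
      simp only [smul_eq_mul, sub_zero]
      ring
    rw [hcomp] at hmono
    rw [hftc] at hmono
    linarith
  -- second integration
  have hftc2 : ∫ t in (0:ℝ)..1, dφ t = φ 1 - φ 0 :=
    intervalIntegral.integral_eq_sub_of_hasDerivAt (fun t _ => hφ' t)
      (hdφ_cont.intervalIntegrable 0 1)
  have hmono2 : ∫ t in (0:ℝ)..1, (dφ 0 + ddφ 0 * t - (L * ‖ε‖ ^ 3 / 2) * t ^ 2) ≤
      ∫ t in (0:ℝ)..1, dφ t := by
    apply intervalIntegral.integral_mono_on zero_le_one
    · apply Continuous.intervalIntegrable; fun_prop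
    · exact hdφ_cont.intervalIntegrable 0 1
    · intro t ht
      exact hdφ_bound t ht.1
  have hcomp2 : ∫ t in (0:ℝ)..1, (dφ 0 + ddφ 0 * t - (L * ‖ε‖ ^ 3 / 2) * t ^ 2) =
      dφ 0 + ddφ 0 / 2 - L * ‖ε‖ ^ 3 / 6 := by
    have h1 : (fun t : ℝ => dφ 0 + ddφ 0 * t - (L * ‖ε‖ ^ 3 / 2) * t ^ 2) =
        fun t : ℝ => (dφ 0 + ddφ 0 * t) - (L * ‖ε‖ ^ 3 / 2) * t ^ 2 := rfl
    have hJ1 : IntervalIntegrable (fun _ : ℝ => dφ 0) MeasureTheory.volume 0 1 :=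
      intervalIntegrable_const
    have hJ2 : IntervalIntegrable (fun t : ℝ => ddφ 0 * t) MeasureTheory.volume 0 1 := by
      apply Continuous.intervalIntegrable; fun_prop
    have hJ3 : IntervalIntegrable (fun t : ℝ => (L * ‖ε‖ ^ 3 / 2) * t ^ 2)
        MeasureTheory.volume 0 1 := by
      apply Continuous.intervalIntegrable; fun_prop
    rw [h1, intervalIntegral.integral_sub (hJ1.add hJ2) hJ3,
      intervalIntegral.integral_add hJ1 hJ2,
      intervalIntegral.integral_const_mul, intervalIntegral.integral_const_mul,
      integral_id, integral_pow, intervalIntegral.integral_const]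
    simp only [smul_eq_mul, sub_zero]
    norm_num
    ring
  have hmain : dφ 0 + ddφ 0 / 2 - L * ‖ε‖ ^ 3 / 6 ≤ φ 1 - φ 0 := by
    rw [← hcomp2, ← hftc2]; exact hmono2
  have hφ0 : φ 0 = M θ := by rw [hφ_def]; simp [hc0]
  have hφ1 : φ 1 = M (θ + ε) := by rw [hφ_def]; simp [hc1]
  have hdφ0 : dφ 0 = ⟪g θ, ε⟫ := by rw [hdφ_def]; simp [hc0]
  have hddφ0 : ddφ 0 = ⟪H θ ε, ε⟫ := by rw [hddφ_def]; simp [hc0]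
  rw [hφ0, hφ1, hdφ0, hddφ0] at hmain
  have hsym : ⟪H θ ε, ε⟫ = ⟪fderiv ℝ (gradient M) θ ε, ε⟫ := rfl
  have hg' : ⟪g θ, ε⟫ = ⟪gradient M θ, ε⟫ := rfl
  rw [hsym, hg'] at hmain
  linarith

end Aux

/-- **Anchor Gap as Local Sharpness (upper bound).**
If `M : E → ℝ` is twice continuously differentiable with Lipschitz Hessian
(constant `L ≥ 0`), and `ε*` minimizes `ε ↦ M (θ + ε)` over the closed ball of
radius `ρ`, then the Anchor Gap `Γ(θ) = M θ − M (θ + ε*)` satisfies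
`Γ(θ) ≤ ρ ‖∇M(θ)‖ − (1/2) ⟪ε*, ∇²M(θ) ε*⟫ + (L/6) ρ³`. -/
theorem anchor_gap_le_sharpness
    {E : Type*} [NormedAddCommGroup E] [InnerProductSpace ℝ E]
    [FiniteDimensional ℝ E]
    (M : E → ℝ) (θ : E) (ρ : ℝ) (hρ : 0 < ρ)
    (hM : ContDiff ℝ 2 M)
    (L : ℝ) (hL : 0 ≤ L)
    (hLip : ∀ x y : E,
      ‖fderiv ℝ (gradient M) x - fderiv ℝ (gradient M) y‖ ≤ L * ‖x - y‖)
    (εstar : E) (hball : ‖εstar‖ ≤ ρ)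
    (hmin : ∀ ε : E, ‖ε‖ ≤ ρ → M (θ + εstar) ≤ M (θ + ε)) :
    M θ - M (θ + εstar) ≤
      ρ * ‖gradient M θ‖
        - (1 / 2) * ⟪εstar, fderiv ℝ (gradient M) θ εstar⟫
        + (L / 6) * ρ ^ 3 := by
  have htaylor := taylor_lower_bound M θ εstar hM L hLip
  have h1 : -⟪gradient M θ, εstar⟫ ≤ ρ * ‖gradient M θ‖ := by
    have := abs_real_inner_le_norm (gradient M θ) εstar
    have habs := (abs_le.mp this).1
    have h5 : ‖gradient M θ‖ * ‖εstar‖ ≤ ‖gradient M θ‖ * ρ :=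
      mul_le_mul_of_nonneg_left hball (norm_nonneg _)
    nlinarith [norm_nonneg (gradient M θ)]
  have h2 : ⟪fderiv ℝ (gradient M) θ εstar, εstar⟫ =
      ⟪εstar, fderiv ℝ (gradient M) θ εstar⟫ := real_inner_comm _ _
  have h3 : ‖εstar‖ ^ 3 ≤ ρ ^ 3 := pow_le_pow_left₀ (norm_nonneg _) hball 3
  have h4 : (L / 6) * ‖εstar‖ ^ 3 ≤ (L / 6) * ρ ^ 3 := by gcongr
  linarith [htaylor, h1]
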